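/- Let U and V be subspaces of ℝⁿ and P_U, P_V the orthogonal projections onto them. Then ‖P_U - P_V‖₂ = max{‖P_V(I - P_U)‖₂, ‖P_U(I - P_V)‖₂}, where ‖·‖₂ is the operator (spectral) norm. -/

import Mathlib

noncomputable section

/-- The orthogonal projection onto a subspace of `ℝⁿ`, as a continuous linear map on `ℝⁿ`. -/
def proj {n : ℕ} (V : Submodule ℝ (EuclideanSpace ℝ (Fin n))) :
    EuclideanSpace ℝ (Fin n) →L[ℝ] EuclideanSpace ℝ (Fin n) :=
  V.subtypeL.comp (V.orthogonalProjection)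

section aux

variable {n : ℕ}

local notation "E" => EuclideanSpace ℝ (Fin n)

lemma proj_mem (U : Submodule ℝ (EuclideanSpace ℝ (Fin n))) (x : E) : proj U x ∈ U :=
  (U.orthogonalProjection x).2

lemma proj_idem (U : Submodule ℝ (EuclideanSpace ℝ (Fin n))) (x : E) :
    proj U (proj U x) = proj U x := by
  simp [proj, Submodule.orthogonalProjection_mem_subspace_eq_self, Submodule.starProjection_eq_self_iff]

lemma sub_proj_mem (U : Submodule ℝ (EuclideanSpace ℝ (Fin n))) (x : E) :
    x - proj U x ∈ Uᗮ :=
  Submodule.sub_starProjection_mem_orthogonal x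

lemma proj_isSelfAdjoint (U : Submodule ℝ (EuclideanSpace ℝ (Fin n))) :
    IsSelfAdjoint (proj U) :=
  isSelfAdjoint_starProjection U

end aux

open RealInnerProductSpace

/-- For subspaces `U, V` of `ℝⁿ` with orthogonal projections `P_U, P_V`,
`‖P_U - P_V‖₂ = max{‖P_V(I - P_U)‖₂, ‖P_U(I - P_V)‖₂}` in operator norm. -/
theorem proj_diff_norm {n : ℕ} (U V : Submodule ℝ (EuclideanSpace ℝ (Fin n))) :
    ‖proj U - proj V‖
      = max ‖(proj V).comp (ContinuousLinearMap.id ℝ (EuclideanSpace ℝ (Fin n)) - proj U)‖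
            ‖(proj U).comp (ContinuousLinearMap.id ℝ (EuclideanSpace ℝ (Fin n)) - proj V)‖ := by
  set P : (EuclideanSpace ℝ (Fin n)) →L[ℝ] (EuclideanSpace ℝ (Fin n)) := proj U with hPdef
  set Q : (EuclideanSpace ℝ (Fin n)) →L[ℝ] (EuclideanSpace ℝ (Fin n)) := proj V with hQdef
  set I' : (EuclideanSpace ℝ (Fin n)) →L[ℝ] (EuclideanSpace ℝ (Fin n)) := ContinuousLinearMap.id ℝ (EuclideanSpace ℝ (Fin n)) with hIdef
  set A : (EuclideanSpace ℝ (Fin n)) →L[ℝ] (EuclideanSpace ℝ (Fin n)) := P - Q with hAdef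
  set B : (EuclideanSpace ℝ (Fin n)) →L[ℝ] (EuclideanSpace ℝ (Fin n)) := Q.comp (I' - P) with hBdef
  set C : (EuclideanSpace ℝ (Fin n)) →L[ℝ] (EuclideanSpace ℝ (Fin n)) := P.comp (I' - Q) with hCdef
  set D : (EuclideanSpace ℝ (Fin n)) →L[ℝ] (EuclideanSpace ℝ (Fin n)) := (I' - P).comp Q with hDdef
  -- D is the adjoint of B, so they have equal norms
  have hadj : ContinuousLinearMap.adjoint B = D := by
    rw [hBdef, hDdef, ContinuousLinearMap.adjoint_comp]
    congr 1
    · rw [map_sub]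
      congr 1
      · rw [hIdef, ContinuousLinearMap.adjoint_id]
      · exact (proj_isSelfAdjoint U)
    · exact (proj_isSelfAdjoint V)
  have hBD : ‖B‖ = ‖D‖ := by
    rw [← hadj]; exact (ContinuousLinearMap.adjoint.norm_map B).symm
  -- pointwise: A x = C x - D x
  have hACD : ∀ x : (EuclideanSpace ℝ (Fin n)), A x = C x - D x := by
    intro x
    simp only [hAdef, hCdef, hDdef, ContinuousLinearMap.sub_apply,
      ContinuousLinearMap.comp_apply, ContinuousLinearMap.id_apply, map_sub]
    abel
  -- orthogonality : C x ∈ U, D x ∈ Uᗮ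
  have hinner : ∀ x : (EuclideanSpace ℝ (Fin n)), (inner ℝ (C x) (D x) : ℝ) = 0 := by
    intro x
    have hC : C x ∈ U := proj_mem U _
    have hD : D x ∈ Uᗮ := by
      simpa [hDdef, hIdef, hPdef] using sub_proj_mem U (Q x)
    exact Submodule.inner_right_of_mem_orthogonal hC hD
  -- Pythagorean identity
  have hsq : ∀ x : (EuclideanSpace ℝ (Fin n)), ‖A x‖ ^ 2 = ‖C x‖ ^ 2 + ‖D x‖ ^ 2 := by
    intro x
    rw [hACD x, norm_sub_sq_real, hinner x]
    ring
  set M := max ‖B‖ ‖C‖ with hM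
  have hM0 : 0 ≤ M := le_trans (norm_nonneg B) (le_max_left _ _)
  apply le_antisymm
  · -- ‖A‖ ≤ M
    apply ContinuousLinearMap.opNorm_le_bound _ hM0
    intro x
    have hCx : ‖C x‖ ≤ ‖C‖ * ‖(I' - Q) x‖ := by
      have h : C x = C ((I' - Q) x) := by
        simp only [hCdef, hIdef, hQdef, hPdef, ContinuousLinearMap.comp_apply,
          ContinuousLinearMap.sub_apply, ContinuousLinearMap.id_apply, map_sub, proj_idem]
        abel
      rw [h]
      exact C.le_opNorm _
    have hDx : ‖D x‖ ≤ ‖D‖ * ‖Q x‖ := by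
      have h : D x = D (Q x) := by
        simp only [hDdef, hIdef, hQdef, hPdef, ContinuousLinearMap.comp_apply,
          ContinuousLinearMap.sub_apply, ContinuousLinearMap.id_apply, proj_idem]
      rw [h]
      exact D.le_opNorm _
    -- Pythagoras for x = Q x + (I' - Q) x
    have hx : ‖x‖ ^ 2 = ‖Q x‖ ^ 2 + ‖(I' - Q) x‖ ^ 2 := by
      have h0 : (inner ℝ (Q x) ((I' - Q) x) : ℝ) = 0 := by
        have h1 : Q x ∈ V := proj_mem V _
        have h2 : (I' - Q) x ∈ Vᗮ := by
          simpa [hIdef, hQdef] using sub_proj_mem V x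
        exact Submodule.inner_right_of_mem_orthogonal h1 h2
      have hxx : x = Q x + (I' - Q) x := by
        simp [hIdef, ContinuousLinearMap.sub_apply]
      nth_rw 1 [hxx]
      rw [norm_add_sq_real, h0]
      ring
    have hCM : ‖C‖ ≤ M := le_max_right _ _
    have hDM : ‖D‖ ≤ M := hBD ▸ le_max_left _ _
    have key : ‖A x‖ ^ 2 ≤ (M * ‖x‖) ^ 2 := by
      rw [hsq x]
      have h1 : ‖C x‖ ^ 2 ≤ (M * ‖(I' - Q) x‖) ^ 2 := by
        have := hCx.trans (mul_le_mul_of_nonneg_right hCM (norm_nonneg _))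
        nlinarith [norm_nonneg (C x)]
      have h2 : ‖D x‖ ^ 2 ≤ (M * ‖Q x‖) ^ 2 := by
        have := hDx.trans (mul_le_mul_of_nonneg_right hDM (norm_nonneg _))
        nlinarith [norm_nonneg (D x)]
      calc ‖C x‖ ^ 2 + ‖D x‖ ^ 2 ≤ (M * ‖(I' - Q) x‖) ^ 2 + (M * ‖Q x‖) ^ 2 := by
            linarith
        _ = (M * ‖x‖) ^ 2 := by rw [mul_pow, mul_pow, mul_pow, hx]; ring
    have hMx : 0 ≤ M * ‖x‖ := mul_nonneg hM0 (norm_nonneg x)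
    exact (pow_le_pow_iff_left₀ (norm_nonneg _) hMx two_ne_zero).mp key
  · -- M ≤ ‖A‖
    have hCle : ∀ x : (EuclideanSpace ℝ (Fin n)), ‖C x‖ ≤ ‖A x‖ := by
      intro x
      have := hsq x
      nlinarith [norm_nonneg (C x), norm_nonneg (A x), sq_nonneg (‖D x‖)]
    have hDle : ∀ x : (EuclideanSpace ℝ (Fin n)), ‖D x‖ ≤ ‖A x‖ := by
      intro x
      have := hsq x
      nlinarith [norm_nonneg (D x), norm_nonneg (A x), sq_nonneg (‖C x‖)]
    have hC' : ‖C‖ ≤ ‖A‖ :=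
      ContinuousLinearMap.opNorm_le_bound _ (norm_nonneg A) fun x =>
        (hCle x).trans (A.le_opNorm x)
    have hD' : ‖D‖ ≤ ‖A‖ :=
      ContinuousLinearMap.opNorm_le_bound _ (norm_nonneg A) fun x =>
        (hDle x).trans (A.le_opNorm x)
    exact max_le (hBD ▸ hD') hC'

end
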